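/- Let γ > 0 be a learning rate and δ ∈ (0,1) a target level. Let e : ℕ → ℝ be a sequence with e t ∈ {0,1} for all t ≥ 1, and let δ' : ℕ → ℝ satisfy the adaptive conformal prediction recursion δ'(t+1) = δ'(t) + γ·(δ − e t) for all t ≥ 1, with initial value δ'(1) = δ₁ ∈ [0,1]. Suppose that for every t ≥ 1, δ'(t) < 0 implies e t = 0, and δ'(t) > 1 implies e t = 1. Then for every T ≥ 1, |(1/T)·∑_{t=1}^{T} e t − δ| ≤ (max(δ₁, 1 − δ₁) + γ) / (T·γ). -/

import Mathlib

/-- Proposition 1 (Gibbs & Candès): the adaptive conformal prediction recursion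
`δ'(t+1) = δ'(t) + γ·(δ − e t)` with miscoverage indicators `e t ∈ {0,1}` satisfies
`|(1/T)·∑_{t=1}^T e t − δ| ≤ (max(δ₁, 1−δ₁) + γ)/(T·γ)` for all `T ≥ 1`. -/
theorem acp_coverage_bound
    (γ δ δ₁ : ℝ) (hγ : 0 < γ) (hδ : δ ∈ Set.Ioo (0 : ℝ) 1)
    (e δ' : ℕ → ℝ)
    (he : ∀ t, 1 ≤ t → e t = 0 ∨ e t = 1)
    (hrec : ∀ t, 1 ≤ t → δ' (t + 1) = δ' t + γ * (δ - e t))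
    (hinit : δ' 1 = δ₁) (hδ₁ : δ₁ ∈ Set.Icc (0 : ℝ) 1)
    (hlow : ∀ t, 1 ≤ t → δ' t < 0 → e t = 0)
    (hhigh : ∀ t, 1 ≤ t → δ' t > 1 → e t = 1) :
    ∀ T : ℕ, 1 ≤ T →
      |(1 / (T : ℝ)) * ∑ t ∈ Finset.Icc 1 T, e t - δ| ≤
        (max δ₁ (1 - δ₁) + γ) / ((T : ℝ) * γ) := by
  obtain ⟨hδ0, hδ1u⟩ := hδ
  obtain ⟨h10, h11⟩ := hδ₁
  have hbound : ∀ t, 1 ≤ t → -γ ≤ δ' t ∧ δ' t ≤ 1 + γ := by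
    intro t ht
    induction t, ht using Nat.le_induction with
    | base => rw [hinit]; constructor <;> linarith
    | succ n hn ih =>
      rw [hrec n hn]
      rcases lt_trichotomy (δ' n) 0 with h | h | h
      · rw [hlow n hn h]
        constructor <;> nlinarith [ih.1, ih.2]
      · rcases he n hn with h0 | h1
        · rw [h0]; constructor <;> nlinarith
        · rw [h1]; constructor <;> nlinarith
      · by_cases h2 : δ' n > 1
        · rw [hhigh n hn h2]
          constructor <;> nlinarith [ih.1, ih.2]
        · push_neg at h2
          rcases he n hn with h0 | h1
          · rw [h0]; constructor <;> nlinarith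
          · rw [h1]; constructor <;> nlinarith
  have htel : ∀ t, 1 ≤ t →
      δ' (t + 1) = δ₁ + γ * ((t : ℝ) * δ - ∑ s ∈ Finset.Icc 1 t, e s) := by
    intro t ht
    induction t, ht using Nat.le_induction with
    | base =>
      rw [hrec 1 le_rfl, hinit, show Finset.Icc 1 1 = {1} from rfl,
        Finset.sum_singleton]
      push_cast; ring
    | succ n hn ih =>
      rw [hrec (n + 1) (by omega), ih, Finset.sum_Icc_succ_top (by omega)]
      push_cast; ring
  intro T hT
  have hTpos : (0 : ℝ) < (T : ℝ) := by exact_mod_cast Nat.lt_of_lt_of_le Nat.zero_lt_one hT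
  have h1 := htel T hT
  have h2 := hbound (T + 1) (by omega)
  have hM : |δ₁ - δ' (T + 1)| ≤ max δ₁ (1 - δ₁) + γ := by
    rw [abs_le]
    constructor
    · have := le_max_right δ₁ (1 - δ₁); linarith [h2.2]
    · have := le_max_left δ₁ (1 - δ₁); linarith [h2.1]
  have hX : (1 / (T : ℝ)) * ∑ t ∈ Finset.Icc 1 T, e t - δ
      = (δ₁ - δ' (T + 1)) / ((T : ℝ) * γ) := by
    field_simp
    linear_combination h1
  rw [hX, abs_div, abs_of_pos (mul_pos hTpos hγ)]
  gcongr
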